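/- arXiv:1105.4972 — 3 statements merged into one kernel-verified Lean document; each statement's English description precedes it below -/
import Mathlib

section
/- Let f : ℂ → ℂ be continuous and bounded on the closed upper half-plane {λ ∈ ℂ : Im λ ≥ 0} and complex differentiable (holomorphic) on the open upper half-plane {λ ∈ ℂ : Im λ > 0}. Then for every z ∈ ℂ with Im z > 0, the function λ ↦ f(λ)·h_z(λ) is Lebesgue integrable on ℝ and ∫_{-∞}^{∞} f(λ) h_z(λ) dλ = f(z), where h_z(ζ) := (1/(2πi))·(1/(ζ − z) − 1/(ζ − z̄)). -/
open MeasureTheory Complex Set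

namespace PoissonAuxHP

noncomputable def gfun (f : ℂ → ℂ) (z : ℂ) : ℂ → ℂ :=
  fun w => dslope f z w * ((z - (starRingEnd ℂ) z) / (w - (starRingEnd ℂ) z))

variable {f : ℂ → ℂ} {z : ℂ} {M : ℝ}

lemma integrable_base (a : ℝ) {b : ℝ} (hb : 0 < b) :
    Integrable (fun x : ℝ => ((x - a)^2 + b^2)⁻¹) := by
  have h1 : Integrable (fun x : ℝ => (b^2)⁻¹ * (1 + (x * b⁻¹)^2)⁻¹) :=
    (integrable_inv_one_add_sq.comp_mul_right' (inv_ne_zero hb.ne')).const_mul _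
  refine (h1.comp_sub_right a).congr ?_
  filter_upwards with x
  have hb2 : b ^ 2 ≠ 0 := by positivity
  field_simp
  ring

lemma integral_base (a : ℝ) {b : ℝ} (hb : 0 < b) :
    ∫ x : ℝ, ((x - a)^2 + b^2)⁻¹ = Real.pi / b := by
  have h0 : (fun x : ℝ => ((x - a)^2 + b^2)⁻¹)
      = fun x : ℝ => (fun y : ℝ => (y^2 + b^2)⁻¹) (x - a) := rfl
  rw [h0, integral_sub_right_eq_self (fun y : ℝ => (y^2 + b^2)⁻¹) a]
  have h1 : (fun y : ℝ => (y^2 + b^2)⁻¹)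
      = fun y : ℝ => (b^2)⁻¹ * (fun v : ℝ => (1 + v^2)⁻¹) (y * b⁻¹) := by
    funext y
    have hb2 : b ^ 2 ≠ 0 := by positivity
    field_simp
    ring
  rw [h1, MeasureTheory.integral_const_mul,
    MeasureTheory.Measure.integral_comp_mul_right (fun v : ℝ => (1 + v^2)⁻¹) b⁻¹,
    integral_univ_inv_one_add_sq]
  rw [inv_inv, abs_of_pos hb]
  field_simp
  ring

lemma norm_sub_conj_ge (hz : 0 < z.im) {w : ℂ} (hw : 0 ≤ w.im) :
    ‖w - z‖ ≤ ‖w - (starRingEnd ℂ) z‖ := by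
  rw [Complex.norm_def, Complex.norm_def]
  apply Real.sqrt_le_sqrt
  simp only [Complex.normSq_apply, Complex.sub_re, Complex.sub_im, Complex.conj_re,
    Complex.conj_im]
  nlinarith [hz, hw]

lemma norm_sub_conj_self (hz : 0 < z.im) : ‖z - (starRingEnd ℂ) z‖ = 2 * z.im := by
  rw [Complex.sub_conj]
  simp [abs_of_pos hz]

lemma sub_conj_ne_zero (hz : 0 < z.im) {w : ℂ} (hw : 0 ≤ w.im) :
    w - (starRingEnd ℂ) z ≠ 0 := by
  intro h
  rw [sub_eq_zero] at h
  have := congrArg Complex.im h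
  simp at this
  linarith

lemma norm_line_sq (z : ℂ) (x t : ℝ) :
    ‖(x:ℂ) + (t:ℂ)*I - z‖^2 = (x - z.re)^2 + (t - z.im)^2 := by
  rw [Complex.sq_norm]
  simp [Complex.normSq_apply]
  ring

lemma g_bound (hM : ∀ w : ℂ, 0 ≤ w.im → ‖f w‖ ≤ M) (hz : 0 < z.im)
    {w : ℂ} (hw : 0 ≤ w.im) (hwz : w ≠ z) :
    ‖gfun f z w‖ ≤ 4 * M * z.im / ‖w - z‖ ^ 2 := by
  have hwz' : w - z ≠ 0 := sub_ne_zero.2 hwz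
  have h0 : (0:ℝ) < ‖w - z‖ := norm_pos_iff.2 hwz'
  have hcne := sub_conj_ne_zero hz hw
  have h0c : (0:ℝ) < ‖w - (starRingEnd ℂ) z‖ := norm_pos_iff.2 hcne
  rw [gfun, dslope_of_ne _ hwz, slope]
  rw [norm_mul, norm_div, norm_sub_conj_self hz]
  have h1 : ‖(w - z)⁻¹ • (f w - f z)‖ ≤ (2 * M) / ‖w - z‖ := by
    rw [norm_smul, norm_inv, div_eq_inv_mul]
    gcongr
    calc ‖f w - f z‖ ≤ ‖f w‖ + ‖f z‖ := norm_sub_le _ _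
      _ ≤ M + M := add_le_add (hM w hw) (hM z hz.le)
      _ = 2 * M := by ring
  have h2 : (2 * z.im) / ‖w - (starRingEnd ℂ) z‖ ≤ (2 * z.im) / ‖w - z‖ := by
    gcongr
    exact norm_sub_conj_ge hz hw
  calc ‖(w - z)⁻¹ • (f w - f z)‖ * (2 * z.im / ‖w - (starRingEnd ℂ) z‖)
      ≤ (2 * M / ‖w - z‖) * (2 * z.im / ‖w - z‖) := by
        have hM0 : 0 ≤ M := le_trans (norm_nonneg _) (hM z hz.le)
        exact mul_le_mul h1 h2 (by positivity) (by positivity)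
    _ = 4 * M * z.im / ‖w - z‖ ^ 2 := by field_simp; ring

lemma g_diff (hf_diff : DifferentiableOn ℂ f {w : ℂ | 0 < w.im}) (hz : 0 < z.im) :
    DifferentiableOn ℂ (gfun f z) {w : ℂ | 0 < w.im} := by
  have hopen : IsOpen {w : ℂ | 0 < w.im} := isOpen_lt continuous_const Complex.continuous_im
  have h1 : DifferentiableOn ℂ (dslope f z) {w : ℂ | 0 < w.im} :=
    (differentiableOn_dslope (hopen.mem_nhds hz)).2 hf_diff
  refine h1.mul ?_
  apply DifferentiableOn.div (differentiableOn_const _)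
  · exact differentiableOn_id.sub (differentiableOn_const _)
  · intro w hw
    exact sub_conj_ne_zero hz (le_of_lt hw)

lemma g_cont (hf_cont : ContinuousOn f {w : ℂ | 0 ≤ w.im})
    (hf_diff : DifferentiableOn ℂ f {w : ℂ | 0 < w.im}) (hz : 0 < z.im) :
    ContinuousOn (gfun f z) {w : ℂ | 0 ≤ w.im} := by
  have hopen : IsOpen {w : ℂ | 0 < w.im} := isOpen_lt continuous_const Complex.continuous_im
  have h1 : ContinuousOn (dslope f z) {w : ℂ | 0 ≤ w.im} := by
    intro w hw
    rcases eq_or_ne w z with rfl | hne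
    · exact (continuousAt_dslope_same.2 (hf_diff.differentiableAt
        (hopen.mem_nhds hz))).continuousWithinAt
    · exact (continuousWithinAt_dslope_of_ne hne).2 (hf_cont w hw)
  refine h1.mul ?_
  apply ContinuousOn.div continuousOn_const (continuousOn_id.sub continuousOn_const)
  intro w hw
  exact sub_conj_ne_zero hz hw

lemma cont_line (hf_cont : ContinuousOn f {w : ℂ | 0 ≤ w.im})
    (hf_diff : DifferentiableOn ℂ f {w : ℂ | 0 < w.im}) (hz : 0 < z.im)
    {ε : ℝ} (hε : 0 ≤ ε) :
    Continuous (fun x : ℝ => gfun f z ((x:ℂ) + (ε:ℂ)*I)) := by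
  apply (g_cont hf_cont hf_diff hz).comp_continuous
  · exact Complex.continuous_ofReal.add continuous_const
  · intro x
    simp [hε]

lemma g_line_bound (hM : ∀ w : ℂ, 0 ≤ w.im → ‖f w‖ ≤ M) (hz : 0 < z.im)
    {ε : ℝ} (hε : 0 ≤ ε) (hε2 : ε ≤ z.im / 2) (x : ℝ) :
    ‖gfun f z ((x:ℂ) + (ε:ℂ)*I)‖ ≤ 4 * M * z.im * ((x - z.re)^2 + (z.im/2)^2)⁻¹ := by
  have hM0 : 0 ≤ M := le_trans (norm_nonneg _) (hM z hz.le)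
  have hne : ((x:ℂ) + (ε:ℂ)*I) ≠ z := by
    intro h
    have := congrArg Complex.im h
    simp at this
    linarith
  refine (g_bound hM hz (by simp [hε]) hne).trans ?_
  rw [norm_line_sq]
  rw [← div_eq_mul_inv]
  apply div_le_div_of_nonneg_left (by positivity) (by positivity)
  nlinarith [sq_nonneg (x - z.re), hε, hε2, hz]

lemma integrable_g_line (hf_cont : ContinuousOn f {w : ℂ | 0 ≤ w.im})
    (hf_diff : DifferentiableOn ℂ f {w : ℂ | 0 < w.im})
    (hM : ∀ w : ℂ, 0 ≤ w.im → ‖f w‖ ≤ M) (hz : 0 < z.im)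
    {ε : ℝ} (hε : 0 ≤ ε) (hε2 : ε ≤ z.im / 2) :
    Integrable (fun x : ℝ => gfun f z ((x:ℂ) + (ε:ℂ)*I)) := by
  have hM0 : 0 ≤ M := le_trans (norm_nonneg _) (hM z hz.le)
  refine Integrable.mono' (((integrable_base z.re (b := z.im/2) (by linarith))).const_mul
      (4 * M * z.im)) (cont_line hf_cont hf_diff hz hε).aestronglyMeasurable ?_
  filter_upwards with x
  exact g_line_bound hM hz hε hε2 x

lemma integral_line_eq_zero (hf_cont : ContinuousOn f {w : ℂ | 0 ≤ w.im})
    (hf_diff : DifferentiableOn ℂ f {w : ℂ | 0 < w.im})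
    (hM : ∀ w : ℂ, 0 ≤ w.im → ‖f w‖ ≤ M) (hz : 0 < z.im)
    {ε : ℝ} (hε : 0 < ε) (hε2 : ε ≤ z.im / 2) :
    ∫ x : ℝ, gfun f z ((x:ℂ) + (ε:ℂ)*I) = 0 := by
  have hM0 : 0 ≤ M := le_trans (norm_nonneg _) (hM z hz.le)
  set g := gfun f z with hg
  have hzn_im : z.im ≤ ‖z‖ := by
    calc z.im ≤ |z.im| := le_abs_self _
    _ ≤ ‖z‖ := by exact Complex.abs_im_le_norm z
  have hzn_re : |z.re| ≤ ‖z‖ := by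
    exact Complex.abs_re_le_norm z
  have hInt := integrable_g_line hf_cont hf_diff hM hz hε.le hε2
  have hB : Filter.Tendsto (fun R : ℝ => ∫ x in -R..R, g ((x:ℂ) + (ε:ℂ)*I)) Filter.atTop
      (nhds (∫ x : ℝ, g ((x:ℂ) + (ε:ℂ)*I))) :=
    intervalIntegral_tendsto_integral hInt Filter.tendsto_neg_atTop_atBot Filter.tendsto_id
  set T := fun R : ℝ => ∫ x in -R..R, g ((x:ℂ) + (R:ℂ)*I) with hT
  set Rt := fun R : ℝ => ∫ y in ε..R, g ((R:ℂ) + (y:ℂ)*I) with hRt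
  set Lt := fun R : ℝ => ∫ y in ε..R, g (((-R:ℝ):ℂ) + (y:ℂ)*I) with hLt
  have key : ∀ᶠ R in Filter.atTop, (∫ x in -R..R, g ((x:ℂ) + (ε:ℂ)*I))
      = T R - I • Rt R + I • Lt R := by
    filter_upwards [Filter.eventually_ge_atTop (2*‖z‖ + ε + 2)] with R hR
    have hεR : ε ≤ R := by linarith [norm_nonneg z]
    have hrect := Complex.integral_boundary_rect_eq_zero_of_differentiableOn g
      (⟨-R, ε⟩ : ℂ) (⟨R, R⟩ : ℂ) ?_
    · simp only at hrect
      linear_combination hrect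
    · apply (g_diff hf_diff hz).mono
      intro w hw
      rw [Complex.mem_reProdIm] at hw
      have h2 := hw.2
      simp only at h2
      rw [Set.uIcc_of_le hεR] at h2
      exact lt_of_lt_of_le hε h2.1
  have hbound : ∀ᶠ R in Filter.atTop,
      ‖T R - I • Rt R + I • Lt R‖ ≤ 64 * M * z.im / R := by
    filter_upwards [Filter.eventually_ge_atTop (2*‖z‖ + ε + 2)] with R hR
    have hRpos : (0:ℝ) < R := by linarith [norm_nonneg z]
    have hR2 : ‖z‖ ≤ R/2 := by linarith [hε]
    have hεR : ε ≤ R := by linarith [norm_nonneg z]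
    have hpt : ∀ w : ℂ, 0 ≤ w.im → R/2 ≤ ‖w - z‖ → ‖g w‖ ≤ 16 * M * z.im / R^2 := by
      intro w hw hdist
      have hwz : w ≠ z := by
        intro h
        rw [h, sub_self, norm_zero] at hdist
        linarith
      refine (g_bound hM hz hw hwz).trans ?_
      have h1 : (R/2)^2 ≤ ‖w - z‖^2 := by nlinarith [norm_nonneg (w - z)]
      calc 4*M*z.im / ‖w - z‖^2 ≤ 4*M*z.im / (R/2)^2 :=
            div_le_div_of_nonneg_left (by positivity) (by positivity) h1
        _ = 16*M*z.im/R^2 := by field_simp; ring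
    have hTb : ‖T R‖ ≤ 16*M*z.im/R^2 * |R - (-R)| := by
      apply intervalIntegral.norm_integral_le_of_norm_le_const
      intro x _
      apply hpt
      · simp [hRpos.le]
      · have h2 : ((x:ℂ) + (R:ℂ)*I - z).im = R - z.im := by simp
        have h1 : |((x:ℂ) + (R:ℂ)*I - z).im| ≤ ‖(x:ℂ) + (R:ℂ)*I - z‖ := by
          exact Complex.abs_im_le_norm _
        rw [h2] at h1
        calc R/2 ≤ R - z.im := by linarith
          _ ≤ |R - z.im| := le_abs_self _
          _ ≤ _ := h1
    have hRtb : ‖Rt R‖ ≤ 16*M*z.im/R^2 * |R - ε| := by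
      apply intervalIntegral.norm_integral_le_of_norm_le_const
      intro y hy
      rw [Set.uIoc_of_le hεR] at hy
      apply hpt
      · simp
        linarith [hy.1]
      · have h2 : ((R:ℂ) + (y:ℂ)*I - z).re = R - z.re := by simp
        have h1 : |((R:ℂ) + (y:ℂ)*I - z).re| ≤ ‖(R:ℂ) + (y:ℂ)*I - z‖ := by
          exact Complex.abs_re_le_norm _
        rw [h2] at h1
        have hre : z.re ≤ R/2 := le_trans (le_abs_self _) (le_trans hzn_re hR2)
        calc R/2 ≤ R - z.re := by linarith
          _ ≤ |R - z.re| := le_abs_self _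
          _ ≤ _ := h1
    have hLtb : ‖Lt R‖ ≤ 16*M*z.im/R^2 * |R - ε| := by
      apply intervalIntegral.norm_integral_le_of_norm_le_const
      intro y hy
      rw [Set.uIoc_of_le hεR] at hy
      apply hpt
      · simp
        linarith [hy.1]
      · have h2 : (((-R:ℝ):ℂ) + (y:ℂ)*I - z).re = -R - z.re := by simp
        have h1 : |(((-R:ℝ):ℂ) + (y:ℂ)*I - z).re| ≤ ‖((-R:ℝ):ℂ) + (y:ℂ)*I - z‖ := by
          exact Complex.abs_re_le_norm _
        rw [h2] at h1
        have hre : -(R/2) ≤ z.re := by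
          have := neg_abs_le z.re
          linarith
        calc R/2 ≤ -(-R - z.re) := by linarith
          _ ≤ |(-R - z.re)| := neg_le_abs _
          _ ≤ _ := h1
    have habs1 : |R - (-R)| = 2*R := by rw [abs_of_pos (by linarith)]; ring
    have habs2 : |R - ε| ≤ R := by rw [_root_.abs_of_nonneg (by linarith : (0:ℝ) ≤ R - ε)]; linarith
    have hIRt : ‖I • Rt R‖ = ‖Rt R‖ := by
      rw [norm_smul, Complex.norm_I, one_mul]
    have hILt : ‖I • Lt R‖ = ‖Lt R‖ := by
      rw [norm_smul, Complex.norm_I, one_mul]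
    have hnn : (0:ℝ) ≤ 16*M*z.im/R^2 := by positivity
    calc ‖T R - I • Rt R + I • Lt R‖
        ≤ ‖T R - I • Rt R‖ + ‖I • Lt R‖ := norm_add_le _ _
      _ ≤ ‖T R‖ + ‖I • Rt R‖ + ‖I • Lt R‖ := by
          have := norm_sub_le (T R) (I • Rt R)
          linarith
      _ ≤ 16*M*z.im/R^2 * (2*R) + 16*M*z.im/R^2 * R + 16*M*z.im/R^2 * R := by
          rw [hIRt, hILt]
          have e1 : ‖T R‖ ≤ 16*M*z.im/R^2 * (2*R) := by rw [← habs1]; exact hTb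
          have e2 : ‖Rt R‖ ≤ 16*M*z.im/R^2 * R :=
            le_trans hRtb (by apply mul_le_mul_of_nonneg_left habs2 hnn)
          have e3 : ‖Lt R‖ ≤ 16*M*z.im/R^2 * R :=
            le_trans hLtb (by apply mul_le_mul_of_nonneg_left habs2 hnn)
          linarith
      _ = 64 * M * z.im / R := by field_simp; ring
  have h0 : Filter.Tendsto (fun R : ℝ => 64*M*z.im / R) Filter.atTop (nhds 0) :=
    Filter.Tendsto.div_atTop tendsto_const_nhds Filter.tendsto_id
  have hRHS : Filter.Tendsto (fun R : ℝ => T R - I • Rt R + I • Lt R)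
      Filter.atTop (nhds 0) := squeeze_zero_norm' hbound h0
  exact tendsto_nhds_unique hB (hRHS.congr' (key.mono fun R h => h.symm))

lemma integral_g_eq_zero (hf_cont : ContinuousOn f {w : ℂ | 0 ≤ w.im})
    (hf_diff : DifferentiableOn ℂ f {w : ℂ | 0 < w.im})
    (hM : ∀ w : ℂ, 0 ≤ w.im → ‖f w‖ ≤ M) (hz : 0 < z.im) :
    ∫ x : ℝ, gfun f z (x:ℂ) = 0 := by
  have hM0 : 0 ≤ M := le_trans (norm_nonneg _) (hM z hz.le)
  set e : ℕ → ℝ := fun n => z.im/2 * (1/(n+1)) with he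
  have hepos : ∀ n, 0 < e n := fun n => by positivity
  have hele : ∀ n, e n ≤ z.im/2 := by
    intro n
    rw [he]
    have h1 : (1:ℝ)/(n+1) ≤ 1 := by
      rw [div_le_one (by positivity)]
      linarith [Nat.cast_nonneg (α := ℝ) n]
    nlinarith [hz]
  have he0 : Filter.Tendsto e Filter.atTop (nhds 0) := by
    have h := tendsto_one_div_add_atTop_nhds_zero_nat.const_mul (z.im/2)
    rw [he]
    simpa using h
  have hzero : ∀ n, ∫ x : ℝ, gfun f z ((x:ℂ) + ((e n : ℝ):ℂ)*I) = 0 :=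
    fun n => integral_line_eq_zero hf_cont hf_diff hM hz (hepos n) (hele n)
  have hlim : Filter.Tendsto (fun n => ∫ x : ℝ, gfun f z ((x:ℂ) + ((e n : ℝ):ℂ)*I))
      Filter.atTop (nhds (∫ x : ℝ, gfun f z (x:ℂ))) := by
    apply tendsto_integral_of_dominated_convergence
      (fun x => 4*M*z.im * ((x - z.re)^2 + (z.im/2)^2)⁻¹)
    · intro n
      exact (cont_line hf_cont hf_diff hz (hepos n).le).aestronglyMeasurable
    · exact (integrable_base z.re (by linarith)).const_mul _
    · intro n
      filter_upwards with x
      exact g_line_bound hM hz (hepos n).le (hele n) x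
    · filter_upwards with x
      have hc : ContinuousWithinAt (gfun f z) {w : ℂ | 0 ≤ w.im} (x:ℂ) :=
        (g_cont hf_cont hf_diff hz) _ (by simp)
      apply hc.tendsto.comp
      rw [tendsto_nhdsWithin_iff]
      refine ⟨?_, ?_⟩
      · have h1 : Filter.Tendsto (fun n => ((x:ℂ) + ((e n : ℝ):ℂ)*I)) Filter.atTop
            (nhds ((x:ℂ) + ((0:ℝ):ℂ)*I)) := by
          apply Filter.Tendsto.const_add
          exact Filter.Tendsto.mul_const I ((Complex.continuous_ofReal.tendsto 0).comp he0)
        have h2 : ((x:ℂ) + ((0:ℝ):ℂ)*I) = (x:ℂ) := by simp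
        rw [h2] at h1
        exact h1
      · filter_upwards with n
        simp [(hepos n).le]
  exact tendsto_nhds_unique (hlim.congr hzero) tendsto_const_nhds

lemma integrable_g_real (hf_cont : ContinuousOn f {w : ℂ | 0 ≤ w.im})
    (hf_diff : DifferentiableOn ℂ f {w : ℂ | 0 < w.im})
    (hM : ∀ w : ℂ, 0 ≤ w.im → ‖f w‖ ≤ M) (hz : 0 < z.im) :
    Integrable (fun x : ℝ => gfun f z (x:ℂ)) := by
  have h := integrable_g_line hf_cont hf_diff hM hz (le_refl (0:ℝ)) (by linarith)
  refine h.congr ?_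
  filter_upwards with x
  norm_num

end PoissonAuxHP

/-- Poisson integral formula for the upper half-plane: if `f` is continuous and bounded
on the closed upper half-plane and holomorphic on the open upper half-plane, then for
`Im z > 0`, `λ ↦ f(λ) h_z(λ)` is integrable on `ℝ` and its integral equals `f z`, where
`h_z(ζ) = (1/(2πi)) (1/(ζ - z) - 1/(ζ - conj z))`. -/
theorem poisson_integral_formula_upper_half_plane
    (f : ℂ → ℂ)
    (hf_cont : ContinuousOn f {w : ℂ | 0 ≤ w.im})
    (hf_bdd : ∃ M : ℝ, ∀ w : ℂ, 0 ≤ w.im → ‖f w‖ ≤ M)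
    (hf_diff : DifferentiableOn ℂ f {w : ℂ | 0 < w.im})
    (z : ℂ) (hz : 0 < z.im) :
    Integrable (fun lam : ℝ =>
        f lam * ((1 / (2 * Real.pi * I)) *
          (1 / ((lam : ℂ) - z) - 1 / ((lam : ℂ) - (starRingEnd ℂ) z)))) ∧
    ∫ lam : ℝ,
        f lam * ((1 / (2 * Real.pi * I)) *
          (1 / ((lam : ℂ) - z) - 1 / ((lam : ℂ) - (starRingEnd ℂ) z)))
      = f z := by
  obtain ⟨M, hM⟩ := hf_bdd
  have hbne : (z.im : ℂ) ≠ 0 := ofReal_ne_zero.2 hz.ne'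
  have h2piI : (2 * (Real.pi:ℂ) * I) ≠ 0 :=
    mul_ne_zero (mul_ne_zero two_ne_zero (ofReal_ne_zero.2 Real.pi_ne_zero)) I_ne_zero
  have h1 : ∀ x : ℝ, ((x:ℂ) - z) ≠ 0 := by
    intro x h
    have := congrArg Complex.im h
    simp at this
    linarith
  have h2 : ∀ x : ℝ, ((x:ℂ) - (starRingEnd ℂ) z) ≠ 0 := by
    intro x
    exact PoissonAuxHP.sub_conj_ne_zero hz (by simp)
  have hprod : ∀ x : ℝ, ((x:ℂ) - z) * ((x:ℂ) - (starRingEnd ℂ) z)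
      = (((x - z.re)^2 + z.im^2 : ℝ) : ℂ) := by
    intro x
    have hc : ((x:ℂ) - (starRingEnd ℂ) z) = (starRingEnd ℂ) ((x:ℂ) - z) := by simp
    rw [hc, Complex.mul_conj, Complex.normSq_apply]
    push_cast
    simp
    ring
  have hker : ∀ x : ℝ, 1/((x:ℂ)-z) - 1/((x:ℂ)-(starRingEnd ℂ) z)
      = (z - (starRingEnd ℂ) z)/(((x:ℂ)-z)*((x:ℂ)-(starRingEnd ℂ) z)) := by
    intro x
    rw [div_sub_div _ _ (h1 x) (h2 x)]
    congr 1
    ring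
  have hker2 : ∀ x : ℝ, 1/((x:ℂ)-z) - 1/((x:ℂ)-(starRingEnd ℂ) z)
      = (2*(z.im:ℂ)*I) * (((((x - z.re)^2 + z.im^2)⁻¹ : ℝ)) : ℂ) := by
    intro x
    rw [hker x, hprod x, Complex.sub_conj]
    push_cast
    rw [div_eq_mul_inv]
  have hdecomp : ∀ x : ℝ,
      f x * ((1/(2*(Real.pi:ℂ)*I)) * (1/((x:ℂ)-z) - 1/((x:ℂ)-(starRingEnd ℂ) z)))
      = (1/(2*(Real.pi:ℂ)*I)) *
        (PoissonAuxHP.gfun f z x + f z * (1/((x:ℂ)-z) - 1/((x:ℂ)-(starRingEnd ℂ) z))) := by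
    intro x
    have hxz : (x:ℂ) ≠ z := by
      intro h
      have := congrArg Complex.im h
      simp at this
      linarith
    rw [PoissonAuxHP.gfun, dslope_of_ne _ hxz, slope, hker x]
    simp only [smul_eq_mul, vsub_eq_sub]
    field_simp
    ring
  have hKint : Integrable (fun x : ℝ =>
      1/((x:ℂ)-z) - 1/((x:ℂ)-(starRingEnd ℂ) z)) := by
    have hbase : Integrable (fun x : ℝ =>
        (2*(z.im:ℂ)*I) * (((((x - z.re)^2 + z.im^2)⁻¹ : ℝ)) : ℂ)) := by
      have h := (PoissonAuxHP.integrable_base z.re hz).ofReal (𝕜 := ℂ)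
      exact h.const_mul _
    exact hbase.congr (Filter.Eventually.of_forall fun x => (hker2 x).symm)
  have hKval : ∫ x : ℝ, (1/((x:ℂ)-z) - 1/((x:ℂ)-(starRingEnd ℂ) z))
      = 2*(Real.pi:ℂ)*I := by
    calc ∫ x : ℝ, (1/((x:ℂ)-z) - 1/((x:ℂ)-(starRingEnd ℂ) z))
        = ∫ x : ℝ, (2*(z.im:ℂ)*I) * (((((x - z.re)^2 + z.im^2)⁻¹ : ℝ)) : ℂ) :=
          integral_congr_ae (Filter.Eventually.of_forall fun x => hker2 x)
      _ = (2*(z.im:ℂ)*I) * ∫ x : ℝ, (((((x - z.re)^2 + z.im^2)⁻¹ : ℝ)) : ℂ) :=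
          MeasureTheory.integral_const_mul _ _
      _ = (2*(z.im:ℂ)*I) * ((∫ x : ℝ, ((x - z.re)^2 + z.im^2)⁻¹ : ℝ) : ℂ) := by
          congr 1
          exact integral_ofReal
      _ = (2*(z.im:ℂ)*I) * ((Real.pi / z.im : ℝ) : ℂ) := by
          rw [PoissonAuxHP.integral_base z.re hz]
      _ = 2*(Real.pi:ℂ)*I := by
          push_cast
          field_simp
  have hg_int := PoissonAuxHP.integrable_g_real hf_cont hf_diff hM hz
  have hg0 := PoissonAuxHP.integral_g_eq_zero hf_cont hf_diff hM hz
  have hsum_int : Integrable (fun x : ℝ =>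
      (1/(2*(Real.pi:ℂ)*I)) * (PoissonAuxHP.gfun f z x
        + f z * (1/((x:ℂ)-z) - 1/((x:ℂ)-(starRingEnd ℂ) z)))) :=
    (hg_int.add (hKint.const_mul (f z))).const_mul _
  constructor
  · exact hsum_int.congr (Filter.Eventually.of_forall fun x => (hdecomp x).symm)
  · calc ∫ x : ℝ, f x * ((1/(2*(Real.pi:ℂ)*I)) *
          (1/((x:ℂ)-z) - 1/((x:ℂ)-(starRingEnd ℂ) z)))
        = ∫ x : ℝ, (1/(2*(Real.pi:ℂ)*I)) * (PoissonAuxHP.gfun f z x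
            + f z * (1/((x:ℂ)-z) - 1/((x:ℂ)-(starRingEnd ℂ) z))) :=
          integral_congr_ae (Filter.Eventually.of_forall fun x => hdecomp x)
      _ = (1/(2*(Real.pi:ℂ)*I)) * ∫ x : ℝ, (PoissonAuxHP.gfun f z x
            + f z * (1/((x:ℂ)-z) - 1/((x:ℂ)-(starRingEnd ℂ) z))) :=
          MeasureTheory.integral_const_mul _ _
      _ = (1/(2*(Real.pi:ℂ)*I)) * ((∫ x : ℝ, PoissonAuxHP.gfun f z x)
            + ∫ x : ℝ, f z * (1/((x:ℂ)-z) - 1/((x:ℂ)-(starRingEnd ℂ) z))) := by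
          rw [integral_add hg_int (hKint.const_mul (f z))]
      _ = (1/(2*(Real.pi:ℂ)*I)) * (0 + f z * (2*(Real.pi:ℂ)*I)) := by
          rw [hg0, MeasureTheory.integral_const_mul, hKval]
      _ = f z := by
          field_simp
          ring
end

section
/- Let μ be a positive Borel measure on [0,∞) and let α > 0 and a > 0. Assume that for every t > 0 the function λ ↦ e^{−tλ} is μ-integrable, and that t^α · ∫₀^∞ e^{−tλ} dμ(λ) → a as t → 0⁺. Then μ([0,r]) / r^α → a / Γ(α+1) as r → ∞. -/
open MeasureTheory Filter Topology

namespace KaramataAux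

open Set


noncomputable def c : ℝ := Real.exp (-1)
lemma c_pos : 0 < c := Real.exp_pos _
lemma c_lt_one : c < 1 := by
  have : Real.exp (-1) < Real.exp 0 := Real.exp_lt_exp.mpr (by norm_num)
  simpa [c] using this
lemma c_half_pos : 0 < c / 2 := by linarith [c_pos]
lemma c_half_lt : c / 2 < c := by linarith [c_pos]

noncomputable def q (x : ℝ) : ℝ := (max x (c / 2))⁻¹

lemma q_cont : Continuous q :=
  (continuous_id.max continuous_const).inv₀ fun _ =>
    ne_of_gt (lt_max_of_lt_right c_half_pos)
lemma q_nonneg (x : ℝ) : 0 ≤ q x :=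
  inv_nonneg.mpr (le_max_of_le_right c_half_pos.le)
lemma q_le (x : ℝ) : q x ≤ (c / 2)⁻¹ :=
  inv_anti₀ c_half_pos (le_max_right _ _)
lemma q_mul_le_one {x : ℝ} (hx : 0 < x) : q x * x ≤ 1 := by
  have h1 : q x ≤ x⁻¹ := inv_anti₀ hx (le_max_left _ _)
  calc q x * x ≤ x⁻¹ * x := by nlinarith
    _ = 1 := inv_mul_cancel₀ hx.ne'
lemma q_eq {x : ℝ} (hx : c ≤ x) : q x = x⁻¹ := by
  rw [q, max_eq_left (le_trans c_half_lt.le hx)]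

noncomputable def ramp (b δ x : ℝ) : ℝ := min 1 (max 0 ((x - b) / δ))

lemma ramp_cont (b δ : ℝ) : Continuous (ramp b δ) :=
  continuous_const.min (continuous_const.max ((continuous_id.sub continuous_const).div_const δ))
lemma ramp_nonneg (b δ x : ℝ) : 0 ≤ ramp b δ x :=
  le_min one_pos.le (le_max_left _ _)
lemma ramp_le_one (b δ x : ℝ) : ramp b δ x ≤ 1 := min_le_left _ _
lemma ramp_eq_one {b δ x : ℝ} (hδ : 0 < δ) (hx : b + δ ≤ x) : ramp b δ x = 1 := by
  have : (1 : ℝ) ≤ (x - b) / δ := (le_div_iff₀ hδ).mpr (by linarith)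
  rw [ramp, max_eq_right (le_trans one_pos.le this), min_eq_left this]
lemma ramp_eq_zero {b δ x : ℝ} (hδ : 0 < δ) (hx : x ≤ b) : ramp b δ x = 0 := by
  have : (x - b) / δ ≤ 0 := div_nonpos_of_nonpos_of_nonneg (by linarith) hδ.le
  rw [ramp, max_eq_left this, min_eq_right one_pos.le]

noncomputable def It (μ : Measure ℝ) (α t : ℝ) (f : ℝ → ℝ) : ℝ :=
  t ^ α * ∫ lam, f (Real.exp (-t * lam)) * Real.exp (-t * lam) ∂μ

noncomputable def J (α a : ℝ) (f : ℝ → ℝ) : ℝ :=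
  (a / Real.Gamma α) *
    ∫ lam in Ioi (0:ℝ), f (Real.exp (-lam)) * Real.exp (-lam) * lam ^ (α - 1)

variable {μ : Measure ℝ} {α a : ℝ}

lemma ae_nonneg (hμ : μ (Iio 0) = 0) : ∀ᵐ lam ∂μ, 0 ≤ lam := by
  rw [ae_iff]
  convert hμ using 2
  ext x
  simp [not_le]

lemma exp_mem {t lam : ℝ} (ht : 0 ≤ t) (hlam : 0 ≤ lam) :
    Real.exp (-t * lam) ∈ Icc (0:ℝ) 1 := by
  refine ⟨(Real.exp_pos _).le, ?_⟩
  calc Real.exp (-t * lam) ≤ Real.exp 0 := Real.exp_le_exp.mpr (by nlinarith)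
    _ = 1 := Real.exp_zero

lemma integrable_comp (hμ : μ (Iio 0) = 0)
    (h_int : ∀ t : ℝ, 0 < t → Integrable (fun lam : ℝ => Real.exp (-t * lam)) μ)
    {f : ℝ → ℝ} (hf : Continuous f) {t : ℝ} (ht : 0 < t) :
    Integrable (fun lam => f (Real.exp (-t * lam)) * Real.exp (-t * lam)) μ := by
  obtain ⟨C, hC⟩ := isCompact_Icc.exists_bound_of_continuousOn
    (hf.continuousOn : ContinuousOn f (Icc (0:ℝ) 1))
  refine ((h_int t ht).const_mul C).mono' ?_ ?_
  · exact ((hf.comp (by fun_prop)).mul (by fun_prop)).aestronglyMeasurable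
  · filter_upwards [ae_nonneg hμ] with lam hlam
    have hx := exp_mem ht.le hlam
    have h1 : ‖f (Real.exp (-t * lam))‖ ≤ C := hC _ hx
    have h0 : (0:ℝ) < Real.exp (-t * lam) := Real.exp_pos _
    calc ‖f (Real.exp (-t * lam)) * Real.exp (-t * lam)‖
        = ‖f (Real.exp (-t * lam))‖ * Real.exp (-t * lam) := by
          rw [norm_mul, Real.norm_eq_abs (Real.exp _), abs_of_pos h0]
      _ ≤ C * Real.exp (-t * lam) := by nlinarith

lemma J_integrand_integrable (hα : 0 < α) {f : ℝ → ℝ} (hf : Continuous f) :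
    IntegrableOn (fun lam => f (Real.exp (-lam)) * Real.exp (-lam) * lam ^ (α - 1))
      (Ioi (0:ℝ)) := by
  obtain ⟨C, hC⟩ := isCompact_Icc.exists_bound_of_continuousOn
    (hf.continuousOn : ContinuousOn f (Icc (0:ℝ) 1))
  refine ((Real.GammaIntegral_convergent hα).const_mul C).mono' ?_ ?_
  · refine ContinuousOn.aestronglyMeasurable ?_ measurableSet_Ioi
    exact ((hf.comp (by fun_prop)).mul (by fun_prop)).continuousOn.mul
      (fun x hx => (Real.continuousAt_rpow_const x _ (Or.inl (ne_of_gt hx))).continuousWithinAt)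
  · filter_upwards [ae_restrict_mem measurableSet_Ioi] with lam (hl : (0:ℝ) < lam)
    have hx : Real.exp (-lam) ∈ Icc (0:ℝ) 1 := by
      simpa using exp_mem (t := 1) (lam := lam) zero_le_one hl.le
    have h1 : ‖f (Real.exp (-lam))‖ ≤ C := hC _ hx
    have h0 : (0:ℝ) < Real.exp (-lam) := Real.exp_pos _
    have hr : (0:ℝ) ≤ lam ^ (α - 1) := Real.rpow_nonneg hl.le _
    calc ‖f (Real.exp (-lam)) * Real.exp (-lam) * lam ^ (α - 1)‖
        = ‖f (Real.exp (-lam))‖ * Real.exp (-lam) * lam ^ (α - 1) := by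
          rw [norm_mul, norm_mul, Real.norm_eq_abs (Real.exp _), abs_of_pos h0,
            Real.norm_eq_abs (_ ^ _), abs_of_nonneg hr]
      _ ≤ C * (Real.exp (-lam) * lam ^ (α - 1)) := by
          rw [← mul_assoc]
          exact mul_le_mul_of_nonneg_right (mul_le_mul_of_nonneg_right h1 h0.le) hr


lemma tendsto_moment
    (h_lim : Tendsto (fun t : ℝ => t ^ α * ∫ lam : ℝ, Real.exp (-t * lam) ∂μ)
      (𝓝[>] 0) (𝓝 a)) (n : ℕ) :
    Tendsto (fun t => It μ α t (fun x => x ^ n)) (𝓝[>] 0)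
      (𝓝 (a * ((n : ℝ) + 1) ^ (-α))) := by
  have hn : (0:ℝ) < (n : ℝ) + 1 := by positivity
  have hmap : Tendsto (fun t : ℝ => ((n : ℝ) + 1) * t) (𝓝[>] 0) (𝓝[>] 0) := by
    refine tendsto_nhdsWithin_of_tendsto_nhds_of_eventually_within _ ?_ ?_
    · have h0 : Tendsto (fun t : ℝ => ((n : ℝ) + 1) * t) (𝓝 0) (𝓝 (((n : ℝ) + 1) * 0)) :=
        (continuous_const.mul continuous_id).tendsto 0
      rw [mul_zero] at h0
      exact h0.mono_left nhdsWithin_le_nhds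
    · filter_upwards [self_mem_nhdsWithin] with t (ht : (0:ℝ) < t)
      exact mul_pos hn ht
  have h2 := (h_lim.comp hmap).const_mul (((n : ℝ) + 1) ^ (-α))
  rw [show (((n : ℝ) + 1) ^ (-α)) * a = a * ((n : ℝ) + 1) ^ (-α) by ring] at h2
  refine h2.congr' ?_
  filter_upwards [self_mem_nhdsWithin] with t (ht : (0:ℝ) < t)
  show ((n : ℝ) + 1) ^ (-α) *
      ((((n : ℝ) + 1) * t) ^ α * ∫ lam : ℝ, Real.exp (-(((n : ℝ) + 1) * t) * lam) ∂μ)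
    = It μ α t (fun x => x ^ n)
  have hint : ∀ lam : ℝ, Real.exp (-(((n : ℝ) + 1) * t) * lam)
      = Real.exp (-t * lam) ^ n * Real.exp (-t * lam) := by
    intro lam
    rw [← Real.exp_nat_mul, ← Real.exp_add]
    congr 1
    ring
  have hpow : (((n : ℝ) + 1) * t) ^ α = ((n : ℝ) + 1) ^ α * t ^ α :=
    Real.mul_rpow hn.le ht.le
  have hcancel : ((n : ℝ) + 1) ^ (-α) * ((n : ℝ) + 1) ^ α = 1 := by
    rw [← Real.rpow_add hn]
    simp
  simp only [It]
  simp_rw [hint, hpow]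
  set I := ∫ lam : ℝ, Real.exp (-t * lam) ^ n * Real.exp (-t * lam) ∂μ
  calc ((n : ℝ) + 1) ^ (-α) * (((n : ℝ) + 1) ^ α * t ^ α * I)
      = (((n : ℝ) + 1) ^ (-α) * ((n : ℝ) + 1) ^ α) * (t ^ α * I) := by ring
    _ = t ^ α * I := by rw [hcancel, one_mul]

lemma J_monomial (hα : 0 < α) (n : ℕ) :
    J α a (fun x => x ^ n) = a * ((n : ℝ) + 1) ^ (-α) := by
  have hn : (0:ℝ) < (n : ℝ) + 1 := by positivity
  have hΓ : (0:ℝ) < Real.Gamma α := Real.Gamma_pos_of_pos hα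
  have h1 : EqOn (fun lam : ℝ => (fun x : ℝ => x ^ n) (Real.exp (-lam)) * Real.exp (-lam) * lam ^ (α - 1))
      (fun lam : ℝ => lam ^ (α - 1) * Real.exp (-(((n : ℝ) + 1) * lam))) (Ioi 0) := by
    intro lam _
    simp only
    rw [← Real.exp_nat_mul, ← Real.exp_add]
    rw [show (n : ℝ) * -lam + -lam = -(((n : ℝ) + 1) * lam) by ring]
    ring
  rw [J, setIntegral_congr_fun measurableSet_Ioi h1,
    Real.integral_rpow_mul_exp_neg_mul_Ioi hα hn, one_div,
    Real.inv_rpow hn.le, ← Real.rpow_neg hn.le]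
  field_simp

lemma tendsto_It_poly (hμ : μ (Iio 0) = 0)
    (h_int : ∀ t : ℝ, 0 < t → Integrable (fun lam : ℝ => Real.exp (-t * lam)) μ)
    (h_lim : Tendsto (fun t : ℝ => t ^ α * ∫ lam : ℝ, Real.exp (-t * lam) ∂μ)
      (𝓝[>] 0) (𝓝 a)) (hα : 0 < α) (p : Polynomial ℝ) :
    Tendsto (fun t => It μ α t (fun x => p.eval x)) (𝓝[>] 0)
      (𝓝 (J α a (fun x => p.eval x))) := by
  set N := p.natDegree + 1 with hN
  have hIt : ∀ᶠ t in 𝓝[>] (0:ℝ), ∑ i ∈ Finset.range N, p.coeff i * It μ α t (fun x => x ^ i)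
      = It μ α t (fun x => p.eval x) := by
    filter_upwards [self_mem_nhdsWithin] with t (ht : (0:ℝ) < t)
    simp only [It]
    have hptw : ∀ lam : ℝ, p.eval (Real.exp (-t * lam)) * Real.exp (-t * lam)
        = ∑ i ∈ Finset.range N, p.coeff i * (Real.exp (-t * lam) ^ i * Real.exp (-t * lam)) := by
      intro lam
      rw [Polynomial.eval_eq_sum_range, Finset.sum_mul]
      exact Finset.sum_congr rfl fun i _ => by ring
    simp_rw [hptw]
    rw [integral_finset_sum _ (fun i _ =>
      (integrable_comp hμ h_int (continuous_pow i) ht).const_mul _)]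
    rw [Finset.mul_sum]
    refine Finset.sum_congr rfl fun i _ => ?_
    rw [integral_const_mul]
    ring
  have hJ : J α a (fun x => p.eval x)
      = ∑ i ∈ Finset.range N, p.coeff i * (a * ((i : ℝ) + 1) ^ (-α)) := by
    rw [J]
    have hptw : EqOn (fun lam : ℝ => (fun x : ℝ => p.eval x) (Real.exp (-lam)) * Real.exp (-lam) * lam ^ (α - 1))
        (fun lam : ℝ => ∑ i ∈ Finset.range N,
          p.coeff i * (Real.exp (-lam) ^ i * Real.exp (-lam) * lam ^ (α - 1))) (Ioi 0) := by
      intro lam _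
      simp only
      rw [Polynomial.eval_eq_sum_range, Finset.sum_mul, Finset.sum_mul]
      exact Finset.sum_congr rfl fun i _ => by ring
    rw [setIntegral_congr_fun measurableSet_Ioi hptw]
    rw [integral_finset_sum _ (fun i _ =>
      ((J_integrand_integrable hα (continuous_pow i)).const_mul _))]
    rw [Finset.mul_sum]
    refine Finset.sum_congr rfl fun i _ => ?_
    rw [integral_const_mul]
    have hmono := J_monomial (a := a) hα i
    rw [J] at hmono
    linear_combination (p.coeff i) * hmono
  rw [hJ]
  exact (tendsto_finset_sum _ fun i _ =>
    (tendsto_moment h_lim i).const_mul _).congr' hIt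



lemma tendsto_It_cont (hμ : μ (Iio 0) = 0) (hα : 0 < α) (ha : 0 < a)
    (h_int : ∀ t : ℝ, 0 < t → Integrable (fun lam : ℝ => Real.exp (-t * lam)) μ)
    (h_lim : Tendsto (fun t : ℝ => t ^ α * ∫ lam : ℝ, Real.exp (-t * lam) ∂μ)
      (𝓝[>] 0) (𝓝 a))
    {f : ℝ → ℝ} (hf : Continuous f) :
    Tendsto (fun t => It μ α t f) (𝓝[>] 0) (𝓝 (J α a f)) := by
  have hΓ : (0:ℝ) < Real.Gamma α := Real.Gamma_pos_of_pos hα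
  rw [Metric.tendsto_nhds]
  intro ε hε
  set ε' := ε / (2 * a + 3) with hε'def
  have hε' : 0 < ε' := by positivity
  have hε'ε : ε' * (2 * a + 3) = ε := by
    rw [hε'def]; field_simp
  obtain ⟨p, hp⟩ := exists_polynomial_near_of_continuousOn 0 1 f hf.continuousOn ε' hε'
  -- J difference bound
  have hJd : |J α a (fun x => p.eval x) - J α a f| ≤ ε' * a := by
    have heq : J α a (fun x => p.eval x) - J α a f = (a / Real.Gamma α) *
        ∫ lam in Ioi (0:ℝ),
          (fun x => p.eval x - f x) (Real.exp (-lam)) * Real.exp (-lam) * lam ^ (α - 1) := by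
      rw [J, J, ← mul_sub,
        ← integral_sub (J_integrand_integrable hα p.continuous) (J_integrand_integrable hα hf)]
      congr 1
      refine integral_congr_ae (Eventually.of_forall fun lam => ?_)
      simp only
      ring
    rw [heq, abs_mul, abs_of_nonneg (div_nonneg ha.le hΓ.le)]
    have hb : |∫ lam in Ioi (0:ℝ),
        (fun x => p.eval x - f x) (Real.exp (-lam)) * Real.exp (-lam) * lam ^ (α - 1)|
        ≤ ∫ lam in Ioi (0:ℝ), ε' * (Real.exp (-lam) * lam ^ (α - 1)) := by
      have habs := norm_integral_le_integral_norm (μ := volume.restrict (Ioi 0))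
        (f := fun lam => (fun x => p.eval x - f x) (Real.exp (-lam)) * Real.exp (-lam)
          * lam ^ (α - 1))
      simp only [Real.norm_eq_abs] at habs
      refine habs.trans ?_
      refine integral_mono_ae (J_integrand_integrable hα (p.continuous.sub hf)).abs
        ((Real.GammaIntegral_convergent hα).const_mul _) ?_
      filter_upwards [ae_restrict_mem measurableSet_Ioi] with lam (hl : (0:ℝ) < lam)
      have hx : Real.exp (-lam) ∈ Icc (0:ℝ) 1 := by
        simpa using exp_mem (t := 1) (lam := lam) zero_le_one hl.le
      have h1 : |p.eval (Real.exp (-lam)) - f (Real.exp (-lam))| ≤ ε' := (hp _ hx).le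
      have h0 : (0:ℝ) < Real.exp (-lam) := Real.exp_pos _
      have hr : (0:ℝ) ≤ lam ^ (α - 1) := Real.rpow_nonneg hl.le _
      rw [abs_mul, abs_mul, abs_of_pos h0, abs_of_nonneg hr, ← mul_assoc]
      exact mul_le_mul_of_nonneg_right (mul_le_mul_of_nonneg_right h1 h0.le) hr
    have hint : ∫ lam in Ioi (0:ℝ), ε' * (Real.exp (-lam) * lam ^ (α - 1))
        = ε' * Real.Gamma α := by
      rw [integral_const_mul, ← Real.Gamma_eq_integral hα]
    calc a / Real.Gamma α * |∫ lam in Ioi (0:ℝ),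
          (fun x => p.eval x - f x) (Real.exp (-lam)) * Real.exp (-lam) * lam ^ (α - 1)|
        ≤ a / Real.Gamma α * (ε' * Real.Gamma α) := by
          rw [← hint]
          exact mul_le_mul_of_nonneg_left hb (div_nonneg ha.le hΓ.le)
      _ = ε' * a := by field_simp
  -- It difference bound, eventually
  have hItd : ∀ᶠ t in 𝓝[>] (0:ℝ),
      |It μ α t (fun x => p.eval x) - It μ α t f| ≤ ε' * (a + 1) := by
    filter_upwards [self_mem_nhdsWithin,
      h_lim.eventually (gt_mem_nhds (show a < a + 1 by linarith))] with t
        (ht : (0:ℝ) < t) hMt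
    have htα : (0:ℝ) ≤ t ^ α := Real.rpow_nonneg ht.le _
    simp only [It]
    rw [← mul_sub, ← integral_sub (integrable_comp hμ h_int p.continuous ht)
      (integrable_comp hμ h_int hf ht)]
    rw [abs_mul, abs_of_nonneg htα]
    have h1 : |∫ lam, (p.eval (Real.exp (-t * lam)) * Real.exp (-t * lam)
          - f (Real.exp (-t * lam)) * Real.exp (-t * lam)) ∂μ|
        ≤ ∫ lam, ε' * Real.exp (-t * lam) ∂μ := by
      have habs := norm_integral_le_integral_norm (μ := μ)
        (f := fun lam => p.eval (Real.exp (-t * lam)) * Real.exp (-t * lam)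
          - f (Real.exp (-t * lam)) * Real.exp (-t * lam))
      simp only [Real.norm_eq_abs] at habs
      refine habs.trans ?_
      refine integral_mono_ae ((integrable_comp hμ h_int p.continuous ht).sub
        (integrable_comp hμ h_int hf ht)).abs ((h_int t ht).const_mul _) ?_
      filter_upwards [ae_nonneg hμ] with lam hlam
      have hx := exp_mem ht.le hlam
      have h0 : (0:ℝ) < Real.exp (-t * lam) := Real.exp_pos _
      have h1 : |p.eval (Real.exp (-t * lam)) - f (Real.exp (-t * lam))| ≤ ε' :=
        (hp _ hx).le
      rw [show p.eval (Real.exp (-t * lam)) * Real.exp (-t * lam)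
          - f (Real.exp (-t * lam)) * Real.exp (-t * lam)
          = (p.eval (Real.exp (-t * lam)) - f (Real.exp (-t * lam))) * Real.exp (-t * lam)
          by ring, abs_mul, abs_of_pos h0]
      exact mul_le_mul_of_nonneg_right h1 h0.le
    calc t ^ α * |∫ lam, (p.eval (Real.exp (-t * lam)) * Real.exp (-t * lam)
          - f (Real.exp (-t * lam)) * Real.exp (-t * lam)) ∂μ|
        ≤ t ^ α * ∫ lam, ε' * Real.exp (-t * lam) ∂μ :=
          mul_le_mul_of_nonneg_left h1 htα
      _ = ε' * (t ^ α * ∫ lam, Real.exp (-t * lam) ∂μ) := by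
          rw [integral_const_mul]; ring
      _ ≤ ε' * (a + 1) := mul_le_mul_of_nonneg_left hMt.le hε'.le
  filter_upwards [hItd,
    Metric.tendsto_nhds.mp (tendsto_It_poly hμ h_int h_lim hα p) ε' hε'] with t h1 h2
  rw [Real.dist_eq] at h2 ⊢
  have h3 : |It μ α t f - J α a f|
      ≤ |It μ α t f - It μ α t (fun x => p.eval x)|
        + |It μ α t (fun x => p.eval x) - J α a (fun x => p.eval x)|
        + |J α a (fun x => p.eval x) - J α a f| := by
    calc |It μ α t f - J α a f|
        ≤ |It μ α t f - It μ α t (fun x => p.eval x)|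
          + |It μ α t (fun x => p.eval x) - J α a f| := abs_sub_le _ _ _
      _ ≤ _ := by
          linarith [abs_sub_le (It μ α t (fun x => p.eval x))
            (J α a (fun x => p.eval x)) (J α a f)]
  rw [abs_sub_comm] at h1
  linarith


lemma indicator_integrable (hμ : μ (Iio 0) = 0)
    (h_int : ∀ t : ℝ, 0 < t → Integrable (fun lam : ℝ => Real.exp (-t * lam)) μ)
    {t : ℝ} (ht : 0 < t) :
    Integrable ((Icc (0:ℝ) t⁻¹).indicator (fun _ => (1:ℝ))) μ := by
  refine ((h_int t ht).const_mul (Real.exp 1)).mono'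
    ((measurable_const.indicator measurableSet_Icc).aestronglyMeasurable) ?_
  filter_upwards [ae_nonneg hμ] with lam hlam
  by_cases hmem : lam ∈ Icc (0:ℝ) t⁻¹
  · rw [indicator_of_mem hmem]
    have htl : t * lam ≤ 1 := by
      calc t * lam ≤ t * t⁻¹ := mul_le_mul_of_nonneg_left hmem.2 ht.le
        _ = 1 := mul_inv_cancel₀ ht.ne'
    rw [← Real.exp_add]
    calc ‖(1:ℝ)‖ = Real.exp 0 := by rw [norm_one, Real.exp_zero]
      _ ≤ Real.exp (1 + -t * lam) := Real.exp_le_exp.mpr (by linarith)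
  · rw [indicator_of_notMem hmem]
    simp only [norm_zero]
    positivity

lemma exp_ge_c {t lam : ℝ} (ht : 0 < t) (hmem : lam ≤ t⁻¹) : c ≤ Real.exp (-t * lam) := by
  have htl : t * lam ≤ 1 := by
    calc t * lam ≤ t * t⁻¹ := mul_le_mul_of_nonneg_left hmem ht.le
      _ = 1 := mul_inv_cancel₀ ht.ne'
  exact Real.exp_le_exp.mpr (by linarith)

lemma exp_le_c {t lam : ℝ} (ht : 0 < t) (hmem : t⁻¹ ≤ lam) : Real.exp (-t * lam) ≤ c := by
  have htl : 1 ≤ t * lam := by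
    calc (1:ℝ) = t * t⁻¹ := (mul_inv_cancel₀ ht.ne').symm
      _ ≤ t * lam := mul_le_mul_of_nonneg_left hmem ht.le
  exact Real.exp_le_exp.mpr (by linarith)

lemma sandwich_upper (hμ : μ (Iio 0) = 0)
    (h_int : ∀ t : ℝ, 0 < t → Integrable (fun lam : ℝ => Real.exp (-t * lam)) μ)
    {t δ : ℝ} (ht : 0 < t) (hδ : 0 < δ) :
    t ^ α * (μ (Icc 0 t⁻¹)).toReal ≤ It μ α t (fun x => q x * ramp (c - δ) δ x) := by
  have h0 : (μ (Icc 0 t⁻¹)).toReal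
      = ∫ lam, (Icc (0:ℝ) t⁻¹).indicator (fun _ => (1:ℝ)) lam ∂μ := by
    rw [integral_indicator_const (1:ℝ) measurableSet_Icc, smul_eq_mul, mul_one, measureReal_def]
  rw [h0, It]
  refine mul_le_mul_of_nonneg_left ?_ (Real.rpow_nonneg ht.le _)
  refine integral_mono_ae (indicator_integrable hμ h_int ht)
    (integrable_comp hμ h_int (q_cont.mul (ramp_cont _ _)) ht) ?_
  filter_upwards [ae_nonneg hμ] with lam hlam
  by_cases hmem : lam ≤ t⁻¹
  · have hx : c ≤ Real.exp (-t * lam) := exp_ge_c ht hmem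
    rw [indicator_of_mem (show lam ∈ Icc (0:ℝ) t⁻¹ from ⟨hlam, hmem⟩)]
    have : (fun x => q x * ramp (c - δ) δ x) (Real.exp (-t * lam)) * Real.exp (-t * lam)
        = 1 := by
      simp only
      rw [q_eq hx, ramp_eq_one hδ (by linarith), mul_one,
        inv_mul_cancel₀ (Real.exp_pos _).ne']
    rw [this]
  · rw [indicator_of_notMem (fun h => hmem h.2)]
    have := q_nonneg (Real.exp (-t * lam))
    have := ramp_nonneg (c - δ) δ (Real.exp (-t * lam))
    have := (Real.exp_pos (-t * lam)).le
    positivity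

lemma sandwich_lower (hμ : μ (Iio 0) = 0)
    (h_int : ∀ t : ℝ, 0 < t → Integrable (fun lam : ℝ => Real.exp (-t * lam)) μ)
    {t δ : ℝ} (ht : 0 < t) (hδ : 0 < δ) :
    It μ α t (fun x => q x * ramp c δ x) ≤ t ^ α * (μ (Icc 0 t⁻¹)).toReal := by
  have h0 : (μ (Icc 0 t⁻¹)).toReal
      = ∫ lam, (Icc (0:ℝ) t⁻¹).indicator (fun _ => (1:ℝ)) lam ∂μ := by
    rw [integral_indicator_const (1:ℝ) measurableSet_Icc, smul_eq_mul, mul_one, measureReal_def]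
  rw [h0, It]
  refine mul_le_mul_of_nonneg_left ?_ (Real.rpow_nonneg ht.le _)
  refine integral_mono_ae (integrable_comp hμ h_int (q_cont.mul (ramp_cont _ _)) ht)
    (indicator_integrable hμ h_int ht) ?_
  filter_upwards [ae_nonneg hμ] with lam hlam
  by_cases hmem : lam ≤ t⁻¹
  · rw [indicator_of_mem (show lam ∈ Icc (0:ℝ) t⁻¹ from ⟨hlam, hmem⟩)]
    have h0' : (0:ℝ) < Real.exp (-t * lam) := Real.exp_pos _
    have hq := q_nonneg (Real.exp (-t * lam))
    have hr1 := ramp_le_one c δ (Real.exp (-t * lam))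
    have hr0 := ramp_nonneg c δ (Real.exp (-t * lam))
    have hq1 := q_mul_le_one h0'
    nlinarith
  · have hx : Real.exp (-t * lam) ≤ c := exp_le_c ht (le_of_not_ge hmem)
    rw [indicator_of_notMem (fun h => hmem h.2),
      ramp_eq_zero hδ hx, mul_zero, zero_mul]

lemma tendsto_J_ramp (hα : 0 < α) (ha : 0 < a) {b : ℝ → ℝ}
    (hb : ∀ δ, 0 < δ → c - δ ≤ b δ ∧ b δ ≤ c) :
    Tendsto (fun δ => J α a (fun x => q x * ramp (b δ) δ x)) (𝓝[>] 0)
      (𝓝 (a / Real.Gamma (α + 1))) := by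
  have hΓ : (0:ℝ) < Real.Gamma α := Real.Gamma_pos_of_pos hα
  have key : Tendsto (fun δ => ∫ lam in Ioi (0:ℝ),
      (fun x => q x * ramp (b δ) δ x) (Real.exp (-lam)) * Real.exp (-lam) * lam ^ (α - 1))
      (𝓝[>] 0)
      (𝓝 (∫ lam in Ioi (0:ℝ), (Ioo (0:ℝ) 1).indicator (fun s => s ^ (α - 1)) lam)) := by
    refine tendsto_integral_filter_of_dominated_convergence
      (fun lam => (c / 2)⁻¹ * (Real.exp (-lam) * lam ^ (α - 1))) ?_ ?_ ?_ ?_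
    · exact Eventually.of_forall fun δ =>
        (J_integrand_integrable hα (q_cont.mul (ramp_cont _ _))).aestronglyMeasurable
    · refine Eventually.of_forall fun δ => ?_
      filter_upwards [ae_restrict_mem measurableSet_Ioi] with lam (hl : (0:ℝ) < lam)
      have h0 : (0:ℝ) < Real.exp (-lam) := Real.exp_pos _
      have hr : (0:ℝ) ≤ lam ^ (α - 1) := Real.rpow_nonneg hl.le _
      have hq := q_nonneg (Real.exp (-lam))
      have hq2 := q_le (Real.exp (-lam))
      have hr1 := ramp_le_one (b δ) δ (Real.exp (-lam))
      have hr0 := ramp_nonneg (b δ) δ (Real.exp (-lam))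
      have hexp1 : Real.exp (-lam) ≤ 1 := by
        rw [← Real.exp_zero]; exact Real.exp_le_exp.mpr (by linarith)
      rw [Real.norm_eq_abs, abs_mul, abs_mul, abs_of_pos h0, abs_of_nonneg hr,
        abs_of_nonneg (by positivity : (0:ℝ) ≤ q (Real.exp (-lam)) * ramp (b δ) δ (Real.exp (-lam)))]
      have hc2 : (0:ℝ) < (c/2)⁻¹ := inv_pos.2 c_half_pos
      have h5 : q (Real.exp (-lam)) * ramp (b δ) δ (Real.exp (-lam)) ≤ (c/2)⁻¹ := by
        nlinarith
      calc q (Real.exp (-lam)) * ramp (b δ) δ (Real.exp (-lam)) * Real.exp (-lam)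
            * lam ^ (α - 1)
          = (q (Real.exp (-lam)) * ramp (b δ) δ (Real.exp (-lam)))
            * (Real.exp (-lam) * lam ^ (α - 1)) := by ring
        _ ≤ (c/2)⁻¹ * (Real.exp (-lam) * lam ^ (α - 1)) :=
            mul_le_mul_of_nonneg_right h5 (by positivity)
    · exact (Real.GammaIntegral_convergent hα).const_mul _
    · have h1 : ∀ᵐ lam ∂(volume.restrict (Ioi (0:ℝ))), lam ≠ 1 := by
        refine ae_restrict_of_ae ?_
        rw [ae_iff]
        have : {lam : ℝ | ¬ lam ≠ 1} = {1} := by ext x; simp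
        rw [this]
        exact Real.volume_singleton
      filter_upwards [ae_restrict_mem measurableSet_Ioi, h1] with lam
        (hl : (0:ℝ) < lam) hne
      rcases lt_or_gt_of_ne hne with hlt | hgt
      · -- lam < 1
        have hx : c < Real.exp (-lam) := by
          rw [c]; exact Real.exp_lt_exp.mpr (by linarith)
        have heq : ∀ᶠ δ in 𝓝[>] (0:ℝ),
            (fun x => q x * ramp (b δ) δ x) (Real.exp (-lam)) * Real.exp (-lam)
              * lam ^ (α - 1) = lam ^ (α - 1) := by
          filter_upwards [Ioo_mem_nhdsGT_of_mem
            ⟨le_refl (0:ℝ), sub_pos.2 hx⟩] with δ hδ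
          obtain ⟨hδ0, hδlt⟩ := hδ
          have hbd := hb δ hδ0
          have : b δ + δ ≤ Real.exp (-lam) := by linarith [hbd.2]
          rw [ramp_eq_one hδ0 this, q_eq hx.le, mul_one,
            inv_mul_cancel₀ (Real.exp_pos _).ne', one_mul]
        rw [Set.indicator_of_mem (show lam ∈ Ioo (0:ℝ) 1 from ⟨hl, hlt⟩)]
        exact tendsto_const_nhds.congr'
          (by filter_upwards [heq] with δ h using h.symm)
      · -- lam > 1
        have hx : Real.exp (-lam) < c := by
          rw [c]; exact Real.exp_lt_exp.mpr (by linarith)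
        have heq : ∀ᶠ δ in 𝓝[>] (0:ℝ),
            (fun x => q x * ramp (b δ) δ x) (Real.exp (-lam)) * Real.exp (-lam)
              * lam ^ (α - 1) = 0 := by
          filter_upwards [Ioo_mem_nhdsGT_of_mem
            ⟨le_refl (0:ℝ), sub_pos.2 hx⟩] with δ hδ
          obtain ⟨hδ0, hδlt⟩ := hδ
          have hbd := hb δ hδ0
          have : Real.exp (-lam) ≤ b δ := by linarith [hbd.1]
          rw [ramp_eq_zero hδ0 this, mul_zero, zero_mul, zero_mul]
        rw [Set.indicator_of_notMem
          (show lam ∉ Ioo (0:ℝ) 1 by simp [not_lt.2 hgt.le])]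
        exact tendsto_const_nhds.congr'
          (by filter_upwards [heq] with δ h using h.symm)
  have hval : ∫ lam in Ioi (0:ℝ), (Ioo (0:ℝ) 1).indicator (fun s => s ^ (α - 1)) lam
      = α⁻¹ := by
    rw [integral_indicator measurableSet_Ioo, Measure.restrict_restrict measurableSet_Ioo,
      inter_eq_left.mpr Ioo_subset_Ioi_self]
    rw [← integral_Ioc_eq_integral_Ioo, ← intervalIntegral.integral_of_le zero_le_one]
    rw [integral_rpow (Or.inl (by linarith : (-1:ℝ) < α - 1))]
    rw [show α - 1 + 1 = α by ring, Real.one_rpow, Real.zero_rpow (ne_of_gt hα)]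
    norm_num [one_div]
  have := key.const_mul (a / Real.Gamma α)
  rw [hval] at this
  have hvv : a / Real.Gamma α * α⁻¹ = a / Real.Gamma (α + 1) := by
    rw [Real.Gamma_add_one (ne_of_gt hα), mul_comm α, ← div_div,
      div_eq_mul_inv (a / Real.Gamma α)]
  rw [hvv] at this
  exact this.congr fun δ => rfl

end KaramataAux

open KaramataAux

/-- Karamata's Tauberian theorem: if `μ` is a positive Borel measure on `[0,∞)`
(modelled as a measure on `ℝ` giving zero mass to `(-∞,0)`), `α > 0`, `a > 0`,
`λ ↦ e^{-tλ}` is `μ`-integrable for every `t > 0`, and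
`t^α ∫ e^{-tλ} dμ(λ) → a` as `t → 0⁺`, then `μ([0,r]) / r^α → a / Γ(α+1)` as `r → ∞`. -/
theorem karamata_tauberian
    (μ : Measure ℝ) (hμ_supp : μ (Set.Iio 0) = 0)
    (α a : ℝ) (hα : 0 < α) (ha : 0 < a)
    (h_int : ∀ t : ℝ, 0 < t → Integrable (fun lam : ℝ => Real.exp (-t * lam)) μ)
    (h_lim : Tendsto (fun t : ℝ => t ^ α * ∫ lam : ℝ, Real.exp (-t * lam) ∂μ)
      (𝓝[>] 0) (𝓝 a)) :
    Tendsto (fun r : ℝ => (μ (Set.Icc 0 r)).toReal / r ^ α)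
      atTop (𝓝 (a / Real.Gamma (α + 1))) := by

  set L := a / Real.Gamma (α + 1) with hL
  have hup : Tendsto (fun δ => J α a (fun x => q x * ramp (c - δ) δ x)) (𝓝[>] 0) (𝓝 L) :=
    tendsto_J_ramp hα ha (b := fun δ => c - δ)
      (fun δ hδ => ⟨le_refl _, show c - δ ≤ c by linarith⟩)
  have hlow : Tendsto (fun δ => J α a (fun x => q x * ramp c δ x)) (𝓝[>] 0) (𝓝 L) :=
    tendsto_J_ramp hα ha (b := fun _ => c)
      (fun δ hδ => ⟨show c - δ ≤ c by linarith, le_refl _⟩)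
  have hG : Tendsto (fun t : ℝ => t ^ α * (μ (Set.Icc 0 t⁻¹)).toReal) (𝓝[>] 0) (𝓝 L) := by
    rw [Metric.tendsto_nhds]
    intro ε hε
    obtain ⟨δ, ⟨hd1, hd2⟩, (hδpos : (0:ℝ) < δ)⟩ :=
      (((Metric.tendsto_nhds.mp hup (ε/2) (half_pos hε)).and
        (Metric.tendsto_nhds.mp hlow (ε/2) (half_pos hε))).and
        self_mem_nhdsWithin).exists
    rw [Real.dist_eq, abs_lt] at hd1 hd2
    have hup2 : J α a (fun x => q x * ramp (c - δ) δ x) < L + ε/2 := by linarith [hd1.2]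
    have hlow2 : L - ε/2 < J α a (fun x => q x * ramp c δ x) := by linarith [hd2.1]
    filter_upwards [self_mem_nhdsWithin,
      (tendsto_It_cont hμ_supp hα ha h_int h_lim
        (q_cont.mul (ramp_cont (c - δ) δ))).eventually (gt_mem_nhds
          (show J α a (fun x => q x * ramp (c - δ) δ x) < L + ε by linarith)),
      (tendsto_It_cont hμ_supp hα ha h_int h_lim
        (q_cont.mul (ramp_cont c δ))).eventually (lt_mem_nhds
          (show L - ε < J α a (fun x => q x * ramp c δ x) by linarith))] with t
        (ht : (0:ℝ) < t) h1 h2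
    have hs1 := sandwich_upper (α := α) hμ_supp h_int ht hδpos
    have hs2 := sandwich_lower (α := α) hμ_supp h_int ht hδpos
    rw [Real.dist_eq, abs_lt]
    simp only [Pi.mul_def] at h1 h2
    constructor <;> linarith
  have hcomp := hG.comp (tendsto_inv_atTop_nhdsGT_zero : Tendsto (fun r : ℝ => r⁻¹) atTop (𝓝[>] 0))
  refine Tendsto.congr' ?_ hcomp
  filter_upwards [eventually_gt_atTop (0:ℝ)] with r hr
  show (r⁻¹) ^ α * (μ (Set.Icc 0 (r⁻¹)⁻¹)).toReal = (μ (Set.Icc 0 r)).toReal / r ^ α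
  rw [inv_inv, Real.inv_rpow hr.le, mul_comm, div_eq_mul_inv]
end

section
/- For every t ≥ 0 and every μ ∈ ℂ with Im μ > 0, the function λ ↦ e^{itλ}·(1/(λ − μ) − 1/(λ − μ̄)) is Lebesgue integrable on ℝ and (1/(2πi)) ∫_{-∞}^{∞} e^{itλ} (1/(λ − μ) − 1/(λ − μ̄)) dλ = e^{itμ}. -/
open MeasureTheory Complex Real Set Filter FourierTransform intervalIntegral

lemma aux_ne_zero {c : ℂ} (hc : 0 < c.re) : c ≠ 0 := by
  intro h; rw [h] at hc; simp at hc

lemma integrableOn_cexp_neg (c : ℂ) (hc : 0 < c.re) :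
    IntegrableOn (fun x : ℝ => Complex.exp (-(c * x))) (Ioi (0:ℝ)) := by
  apply Integrable.mono' (exp_neg_integrableOn_Ioi 0 hc)
  · exact (Complex.continuous_exp.comp (by continuity)).aestronglyMeasurable
  · filter_upwards with x
    rw [Complex.norm_exp]
    simp [mul_comm]

lemma integral_cexp_neg (c : ℂ) (hc : 0 < c.re) :
    ∫ x : ℝ in Ioi (0:ℝ), Complex.exp (-(c * x)) = 1 / c := by
  have hc0 : c ≠ 0 := aux_ne_zero hc
  have key : Tendsto (fun T : ℝ => ∫ x in (0:ℝ)..T, Complex.exp (-(c * x)))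
      atTop (nhds (1 / c)) := by
    have heq : ∀ T : ℝ, (∫ x in (0:ℝ)..T, Complex.exp (-(c * x)))
        = (Complex.exp (-c * T) - 1) / (-c) := by
      intro T
      simp_rw [← neg_mul]
      rw [integral_exp_mul_complex (neg_ne_zero.2 hc0)]
      simp
    simp_rw [heq]
    have h1 : Tendsto (fun T : ℝ => Complex.exp (-c * T)) atTop (nhds 0) := by
      rw [tendsto_zero_iff_norm_tendsto_zero]
      have hnorm : ∀ T : ℝ, ‖Complex.exp (-c * T)‖ = Real.exp (-(c.re * T)) := by
        intro T; rw [Complex.norm_exp]; simp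
      simp_rw [hnorm]
      exact Real.tendsto_exp_neg_atTop_nhds_zero.comp
        (Tendsto.const_mul_atTop hc tendsto_id)
    have h2 : Tendsto (fun T : ℝ => (Complex.exp (-c * T) - 1) / (-c)) atTop
        (nhds ((0 - 1) / (-c))) :=
      (h1.sub (tendsto_const_nhds (x := (1:ℂ)))).div_const (-c)
    simpa [neg_div_neg_eq] using h2
  exact tendsto_nhds_unique
    (intervalIntegral_tendsto_integral_Ioi 0 (integrableOn_cexp_neg c hc) tendsto_id) key

lemma integrable_exp_neg_abs {b : ℝ} (hb : 0 < b) :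
    Integrable (fun x : ℝ => Real.exp (-(b * |x|))) := by
  rw [← integrableOn_univ, ← Iic_union_Ioi (a := (0:ℝ)), integrableOn_union]
  constructor
  · rw [← (Measure.measurePreserving_neg (volume : Measure ℝ)).integrableOn_comp_preimage
        (Homeomorph.neg ℝ).measurableEmbedding]
    simp only [Function.comp_def, abs_neg, neg_preimage, neg_Iic, neg_zero]
    rw [integrableOn_Ici_iff_integrableOn_Ioi]
    refine (exp_neg_integrableOn_Ioi 0 hb).congr_fun ?_ measurableSet_Ioi
    intro x hx
    simp [abs_of_pos (show (0:ℝ) < x from hx), neg_mul]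
  · refine (exp_neg_integrableOn_Ioi 0 hb).congr_fun ?_ measurableSet_Ioi
    intro x hx
    simp [abs_of_pos (show (0:ℝ) < x from hx), neg_mul]

lemma integrable_cexp_neg_abs {b : ℝ} (hb : 0 < b) :
    Integrable (fun x : ℝ => (Real.exp (-(b * |x|)) : ℂ)) :=
  (integrable_exp_neg_abs hb).ofReal

lemma integrable_fourier_integrand {b : ℝ} (hb : 0 < b) (ξ : ℝ) :
    Integrable (fun v : ℝ =>
      Complex.exp (↑(-2 * π * v * ξ) * I) • (Real.exp (-(b * |v|)) : ℂ)) := by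
  simp_rw [smul_eq_mul]
  apply Integrable.bdd_mul (c := 1) (integrable_cexp_neg_abs hb)
  · exact (Complex.continuous_exp.comp (by continuity)).aestronglyMeasurable
  · refine Filter.Eventually.of_forall (fun x => ?_)
    rw [Complex.norm_exp]
    simp

lemma fourier_exp_abs {b : ℝ} (hb : 0 < b) (ξ : ℝ) :
    𝓕 (fun x : ℝ => (Real.exp (-(b * |x|)) : ℂ)) ξ
      = 2 * b / ((b:ℂ)^2 + ((2*π*ξ : ℝ):ℂ)^2) := by
  set c₁ : ℂ := b + (2*π*ξ) * I with hc₁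
  set c₂ : ℂ := b - (2*π*ξ) * I with hc₂
  have hre1 : c₁.re = b := by simp [hc₁]
  have hre2 : c₂.re = b := by simp [hc₂]
  rw [Real.fourier_real_eq_integral_exp_smul]
  have hsplit : (∫ v : ℝ, Complex.exp (↑(-2 * π * v * ξ) * I) • (Real.exp (-(b * |v|)) : ℂ))
      = (∫ v in Iic (0:ℝ), Complex.exp (↑(-2 * π * v * ξ) * I) • (Real.exp (-(b * |v|)) : ℂ))
        + ∫ v in Ioi (0:ℝ), Complex.exp (↑(-2 * π * v * ξ) * I) • (Real.exp (-(b * |v|)) : ℂ) := by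
    rw [← compl_Iic, integral_add_compl measurableSet_Iic
      (integrable_fourier_integrand hb ξ)]
  rw [hsplit]
  have hIoi : (∫ v in Ioi (0:ℝ), Complex.exp (↑(-2 * π * v * ξ) * I) • (Real.exp (-(b * |v|)) : ℂ))
      = 1 / c₁ := by
    rw [← integral_cexp_neg c₁ (by rw [hre1]; exact hb)]
    apply setIntegral_congr_fun measurableSet_Ioi
    intro v hv
    have hv' : (0:ℝ) < v := hv
    simp only [abs_of_pos hv', smul_eq_mul, Complex.ofReal_exp, ← Complex.exp_add]
    congr 1
    rw [hc₁]
    push_cast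
    ring
  have hIic : (∫ v in Iic (0:ℝ), Complex.exp (↑(-2 * π * v * ξ) * I) • (Real.exp (-(b * |v|)) : ℂ))
      = 1 / c₂ := by
    have hneg := integral_comp_neg_Ioi (0:ℝ)
      (f := fun v : ℝ => Complex.exp (↑(-2 * π * v * ξ) * I) • (Real.exp (-(b * |v|)) : ℂ))
    rw [neg_zero] at hneg
    rw [← hneg, ← integral_cexp_neg c₂ (by rw [hre2]; exact hb)]
    apply setIntegral_congr_fun measurableSet_Ioi
    intro v hv
    have hv' : (0:ℝ) < v := hv
    simp only [abs_neg, abs_of_pos hv', smul_eq_mul, Complex.ofReal_exp, ← Complex.exp_add]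
    congr 1
    rw [hc₂]
    push_cast
    ring
  rw [hIoi, hIic]
  have hc₁0 : c₁ ≠ 0 := by
    intro h
    have : c₁.re = 0 := by rw [h]; simp
    rw [hre1] at this
    exact hb.ne' this
  have hc₂0 : c₂ ≠ 0 := by
    intro h
    have : c₂.re = 0 := by rw [h]; simp
    rw [hre2] at this
    exact hb.ne' this
  have hprod : c₁ * c₂ = (b:ℂ)^2 + ((2*π*ξ : ℝ):ℂ)^2 := by
    rw [hc₁, hc₂]
    push_cast
    ring_nf
    rw [Complex.I_sq]
    ring
  have hden : (b:ℂ)^2 + ((2*π*ξ : ℝ):ℂ)^2 ≠ 0 := by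
    rw [← hprod]
    exact mul_ne_zero hc₁0 hc₂0
  rw [div_add_div _ _ hc₂0 hc₁0, ← hprod]
  rw [div_eq_div_iff (mul_ne_zero hc₂0 hc₁0) (hprod ▸ hden)]
  rw [hc₁, hc₂]
  push_cast
  ring

lemma integrable_inv_sq_add {b : ℝ} (hb : b ≠ 0) :
    Integrable (fun x : ℝ => (x^2 + b^2)⁻¹) := by
  have heq : (fun x : ℝ => (x^2 + b^2)⁻¹)
      = fun x : ℝ => (b^2)⁻¹ * (1 + (x * b⁻¹)^2)⁻¹ := by
    funext x
    rw [← mul_inv]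
    congr 1
    field_simp
    ring
  rw [heq]
  exact (integrable_inv_one_add_sq.comp_mul_right' (inv_ne_zero hb)).const_mul _

lemma key_integral {b : ℝ} (hb : 0 < b) {t : ℝ} (ht : 0 ≤ t) :
    ∫ x : ℝ, Complex.exp (I * t * x) * (2 * b / ((b:ℂ)^2 + (x:ℂ)^2))
      = ((2 * π * Real.exp (-(b * t)) : ℝ) : ℂ) := by
  set f : ℝ → ℂ := fun x => (Real.exp (-(b * |x|)) : ℂ) with hf_def
  have hFf : 𝓕 f = fun ξ : ℝ => 2 * b / ((b:ℂ)^2 + ((2*π*ξ : ℝ):ℂ)^2) :=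
    funext (fourier_exp_abs hb)
  have hFf_int : Integrable (𝓕 f) := by
    rw [hFf]
    have : (fun ξ : ℝ => 2 * (b:ℂ) / ((b:ℂ)^2 + ((2*π*ξ : ℝ):ℂ)^2))
        = fun ξ : ℝ => ((2 * b * (((2*π*ξ)^2 + b^2)⁻¹) : ℝ) : ℂ) := by
      funext ξ
      push_cast
      rw [div_eq_mul_inv, add_comm ((b:ℂ)^2)]
    rw [this]
    exact (((integrable_inv_sq_add hb.ne').comp_mul_left' (by positivity : (2*π:ℝ) ≠ 0)).const_mul
      (2*b)).ofReal
  have hf_cont : Continuous f := by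
    apply Complex.continuous_ofReal.comp
    exact Real.continuous_exp.comp ((continuous_const.mul _root_.continuous_abs).neg)
  have hinv := hf_cont.fourierInv_fourier_eq (integrable_cexp_neg_abs hb) hFf_int
  have hval : 𝓕⁻ (𝓕 f) t = f t := by rw [hinv]
  rw [Real.fourierInv_eq'] at hval
  simp only [RCLike.inner_apply, starRingEnd_apply, star_trivial] at hval
  set G : ℝ → ℂ := fun x => Complex.exp (I * t * x) * (2 * b / ((b:ℂ)^2 + (x:ℂ)^2)) with hG_def
  have hcomp : (∫ x : ℝ, G (2 * π * x)) = |(2*π:ℝ)⁻¹| • ∫ y : ℝ, G y :=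
    MeasureTheory.Measure.integral_comp_mul_left G (2*π)
  have hGeq : (∫ x : ℝ, G (2 * π * x)) = f t := by
    rw [← hval, hFf]
    congr 1
    funext ξ
    rw [hG_def]
    simp only [smul_eq_mul]
    congr 2 <;> (push_cast; ring)
  rw [hGeq] at hcomp
  have hπ : (0:ℝ) < 2*π := by positivity
  rw [abs_of_pos (by positivity : (0:ℝ) < (2*π:ℝ)⁻¹)] at hcomp
  have : (∫ y : ℝ, G y) = (2*π:ℝ) • f t := by
    rw [hcomp, smul_smul]
    rw [mul_inv_cancel₀ hπ.ne', one_smul]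
  calc (∫ x : ℝ, Complex.exp (I * t * x) * (2 * b / ((b:ℂ)^2 + (x:ℂ)^2)))
      = ∫ y : ℝ, G y := rfl
    _ = (2*π:ℝ) • f t := this
    _ = ((2 * π * Real.exp (-(b * t)) : ℝ) : ℂ) := by
        simp only [hf_def, _root_.abs_of_nonneg ht, real_smul]
        push_cast
        ring

/-- For `t ≥ 0` and `Im μ > 0`, the function
`λ ↦ e^{itλ} (1/(λ − μ) − 1/(λ − conj μ))` is integrable on `ℝ` and
`(1/(2πi)) ∫_ℝ e^{itλ} (1/(λ − μ) − 1/(λ − conj μ)) dλ = e^{itμ}`. -/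
theorem poisson_integral_exp
    (t : ℝ) (ht : 0 ≤ t) (μ : ℂ) (hμ : 0 < μ.im) :
    Integrable (fun lam : ℝ =>
        Complex.exp (I * t * lam) *
          (1 / ((lam : ℂ) - μ) - 1 / ((lam : ℂ) - (starRingEnd ℂ) μ))) ∧
    (1 / (2 * Real.pi * I)) *
        ∫ lam : ℝ, Complex.exp (I * t * lam) *
          (1 / ((lam : ℂ) - μ) - 1 / ((lam : ℂ) - (starRingEnd ℂ) μ))
      = Complex.exp (I * t * μ) := by
  set a : ℝ := μ.re with ha
  set b : ℝ := μ.im with hb_def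
  have hb : 0 < b := hμ
  have hμeq : μ = (a:ℂ) + (b:ℂ) * I := (Complex.re_add_im μ).symm
  have hconj : (starRingEnd ℂ) μ = (a:ℂ) - (b:ℂ) * I := by
    rw [hμeq]
    simp [Complex.ext_iff]
  -- pointwise identity
  have h_eq : ∀ lam : ℝ,
      (1 / ((lam : ℂ) - μ) - 1 / ((lam : ℂ) - (starRingEnd ℂ) μ))
        = (2 * (b:ℂ) * I) * ((((lam - a)^2 + b^2 : ℝ) : ℂ))⁻¹ := by
    intro lam
    have hX : (lam : ℂ) - μ ≠ 0 := by
      intro h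
      have him := congrArg Complex.im h
      simp [hμeq] at him
      exact hb.ne' him
    have hY : (lam : ℂ) - (starRingEnd ℂ) μ ≠ 0 := by
      intro h
      have him := congrArg Complex.im h
      simp [hconj] at him
      exact hb.ne' him
    have hprod : ((lam : ℂ) - μ) * ((lam : ℂ) - (starRingEnd ℂ) μ)
        = ((((lam - a)^2 + b^2 : ℝ) : ℂ)) := by
      rw [hconj, hμeq]
      push_cast
      ring_nf
      rw [Complex.I_sq]
      ring
    rw [div_sub_div _ _ hX hY, hprod]
    rw [div_eq_mul_inv]
    congr 1
    rw [hconj, hμeq]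
    ring
  have hfun_eq : (fun lam : ℝ =>
      Complex.exp (I * t * lam) *
        (1 / ((lam : ℂ) - μ) - 1 / ((lam : ℂ) - (starRingEnd ℂ) μ)))
      = fun lam : ℝ => Complex.exp (I * t * lam) *
        ((2 * (b:ℂ) * I) * ((((lam - a)^2 + b^2 : ℝ) : ℂ))⁻¹) := by
    funext lam
    rw [h_eq lam]
  have hint_inner : Integrable
      (fun lam : ℝ => (2 * (b:ℂ) * I) * ((((lam - a)^2 + b^2 : ℝ) : ℂ))⁻¹) := by
    have h1 : Integrable (fun lam : ℝ => (((lam - a)^2 + b^2)⁻¹ : ℝ)) :=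
      (integrable_inv_sq_add hb.ne').comp_sub_right a
    simpa using (h1.ofReal.const_mul (2 * (b:ℂ) * I))
  have hint : Integrable (fun lam : ℝ =>
      Complex.exp (I * t * lam) *
        (1 / ((lam : ℂ) - μ) - 1 / ((lam : ℂ) - (starRingEnd ℂ) μ))) := by
    rw [hfun_eq]
    apply Integrable.bdd_mul (c := 1) hint_inner
    · exact (Complex.continuous_exp.comp
        (continuous_const.mul Complex.continuous_ofReal)).aestronglyMeasurable
    · refine Filter.Eventually.of_forall (fun x => ?_)
      rw [Complex.norm_exp]
      simp
  refine ⟨hint, ?_⟩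
  rw [hfun_eq]
  have hshift := MeasureTheory.integral_add_right_eq_self
    (μ := (volume : Measure ℝ))
    (fun lam : ℝ => Complex.exp (I * t * lam) *
        ((2 * (b:ℂ) * I) * ((((lam - a)^2 + b^2 : ℝ) : ℂ))⁻¹)) a
  rw [← hshift]
  have hpoint : ∀ x : ℝ, Complex.exp (I * t * (x + a : ℝ)) *
        ((2 * (b:ℂ) * I) * ((((x + a - a)^2 + b^2 : ℝ) : ℂ))⁻¹)
      = (Complex.exp (I * t * a) * I) *
        (Complex.exp (I * t * x) * (2 * b / ((b:ℂ)^2 + (x:ℂ)^2))) := by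
    intro x
    rw [show I * (t:ℂ) * ((x + a : ℝ):ℂ) = I * t * (a:ℂ) + I * t * (x:ℂ) by push_cast; ring,
      Complex.exp_add]
    push_cast
    rw [add_sub_cancel_right]
    field_simp
    ring
  simp_rw [hpoint]
  rw [MeasureTheory.integral_const_mul, key_integral hb ht]
  rw [show I * (t:ℂ) * μ = I * t * (a:ℂ) + ((-(b * t) : ℝ) : ℂ) by
    rw [hμeq]; push_cast; ring_nf; rw [Complex.I_sq]; ring, Complex.exp_add,
    ← Complex.ofReal_exp]
  have hexp : Real.exp (-(b*t)) ≠ 0 := Real.exp_ne_zero _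
  push_cast
  field_simp [Complex.I_ne_zero, Real.pi_ne_zero]
end
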